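/- Let a_0 = 0 and a_n = 1 − e^{−16^{n+1}} for n ≥ 1. For 1 ≤ p ≤ ∞ and f ∈ L_p(Ω), define G^T(f) = (∫₀^∞ |Σ_{n≥2} t·16^n e^{−16^n t} dE_n(f)|² dt/t)^{1/2} and S(f − E_1(f)) = (Σ_{n≥2} |dE_n(f)|²)^{1/2}. Then √(7/60) · ‖S(f − E_1(f))‖_{L_p(Ω)} ≤ ‖G^T(f)‖_{L_p(Ω)} ≤ √(23/60) · ‖S(f − E_1(f))‖_{L_p(Ω)}. -/

import Mathlib

open MeasureTheory Filter Set Topology ENNReal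

/-- `E_n(f)`: conditional expectation of `f` given `𝒜_n` for `n ≥ 1`, with `E_0 = 0`. -/
noncomputable def condE {Ω : Type*} [m0 : MeasurableSpace Ω] (μ : Measure Ω)
    (F : ℕ → MeasurableSpace Ω) (f : Ω → ℝ) (n : ℕ) : Ω → ℝ :=
  if n = 0 then 0 else μ[f | F n]

/-- The martingale difference `dE_n(f) = E_n(f) - E_{n-1}(f)`. -/
noncomputable def dE {Ω : Type*} [m0 : MeasurableSpace Ω] (μ : Measure Ω)
    (F : ℕ → MeasurableSpace Ω) (f : Ω → ℝ) (n : ℕ) : Ω → ℝ :=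
  fun ω => condE μ F f n ω - condE μ F f (n - 1) ω

/-- The `g`-function `G^T(f)` of the semigroup associated with `a_n = 1 - e^{-16^{n+1}}`,
`G^T(f)(ω) = (∫₀^∞ |Σ_{n≥2} t·16ⁿ e^{-16ⁿ t} dE_n(f)(ω)|² dt/t)^{1/2}`,
taking values in `ℝ≥0∞`. -/
noncomputable def GT {Ω : Type*} [m0 : MeasurableSpace Ω] (μ : Measure Ω)
    (F : ℕ → MeasurableSpace Ω) (f : Ω → ℝ) : Ω → ℝ≥0∞ :=
  fun ω => (∫⁻ t in Ioi (0 : ℝ), ENNReal.ofReal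
    ((∑' n : ℕ, t * 16 ^ (n + 2) * Real.exp (-(16 ^ (n + 2) * t)) * dE μ F f (n + 2) ω) ^ 2 / t))
      ^ (1 / 2 : ℝ)

/-- The martingale square function `S(f - E_1(f))(ω) = (Σ_{n≥2} |dE_n(f)(ω)|²)^{1/2}`,
taking values in `ℝ≥0∞`. -/
noncomputable def Ssq {Ω : Type*} [m0 : MeasurableSpace Ω] (μ : Measure Ω)
    (F : ℕ → MeasurableSpace Ω) (f : Ω → ℝ) : Ω → ℝ≥0∞ :=
  fun ω => (∑' n : ℕ, ENNReal.ofReal ((dE μ F f (n + 2) ω) ^ 2)) ^ (1 / 2 : ℝ)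

/-- The `L_p(Ω)`-norm (`1 ≤ p ≤ ∞`) of an `ℝ≥0∞`-valued function. -/
noncomputable def lpNormE {Ω : Type*} [MeasurableSpace Ω] (μ : Measure Ω) (p : ℝ≥0∞)
    (h : Ω → ℝ≥0∞) : ℝ≥0∞ :=
  if p = ∞ then essSup h μ else (∫⁻ ω, h ω ^ p.toReal ∂μ) ^ (1 / p.toReal)

namespace Stmt11Aux

noncomputable def bb (n : ℕ) : ℝ := 16 ^ (n + 2)

lemma bb_pos (n : ℕ) : 0 < bb n := pow_pos (by norm_num) _

lemma integrableOn_mul_exp {a : ℝ} (ha : 0 < a) :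
    IntegrableOn (fun t : ℝ => t * Real.exp (-(a * t))) (Ioi 0) := by
  have h := integrableOn_rpow_mul_exp_neg_mul_rpow (p := 1) (s := 1) (b := a)
    (by norm_num) (by norm_num) ha
  refine h.congr_fun (fun t ht => ?_) measurableSet_Ioi
  simp only [Real.rpow_one]
  ring_nf

lemma integral_mul_exp {a : ℝ} (ha : 0 < a) :
    ∫ t in Ioi (0:ℝ), t * Real.exp (-(a * t)) = 1 / a ^ 2 := by
  have hderiv : ∀ t ∈ Ioi (0:ℝ),
      HasDerivAt (fun t : ℝ => -(t / a + 1 / a ^ 2) * Real.exp (-(a * t)))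
        (t * Real.exp (-(a * t))) t := by
    intro t _
    have h1 : HasDerivAt (fun t : ℝ => -(t / a + 1 / a ^ 2)) (-(1/a)) t := by
      have h0 := (((hasDerivAt_id t).div_const a).add_const (1 / a ^ 2)).neg
      exact h0
    have h2 : HasDerivAt (fun t : ℝ => Real.exp (-(a * t))) (-a * Real.exp (-(a*t))) t := by
      have := ((hasDerivAt_id t).const_mul a).neg.exp
      simpa [mul_comm] using this
    have : HasDerivAt (fun t : ℝ => -(t / a + 1 / a ^ 2) * Real.exp (-(a * t))) _ t := h1.mul h2
    convert this using 1
    field_simp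
    ring
  have htend : Tendsto (fun t : ℝ => -(t / a + 1 / a ^ 2) * Real.exp (-(a * t))) atTop (𝓝 0) := by
    have h1 : Tendsto (fun t : ℝ => (t:ℝ) ^ (1:ℝ) * Real.exp (-a * t)) atTop (𝓝 0) :=
      tendsto_rpow_mul_exp_neg_mul_atTop_nhds_zero 1 a ha
    have h0 : Tendsto (fun t : ℝ => (t:ℝ) ^ (0:ℝ) * Real.exp (-a * t)) atTop (𝓝 0) :=
      tendsto_rpow_mul_exp_neg_mul_atTop_nhds_zero 0 a ha
    have : Tendsto (fun t : ℝ => -(1/a) * (t ^ (1:ℝ) * Real.exp (-a * t))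
        + (-(1/a^2)) * (t ^ (0:ℝ) * Real.exp (-a * t))) atTop (𝓝 (-(1/a) * 0 + (-(1/a^2)) * 0)) :=
      ((h1.const_mul _).add (h0.const_mul _))
    rw [mul_zero, mul_zero, add_zero] at this
    refine this.congr' ?_
    filter_upwards [eventually_gt_atTop (0:ℝ)] with t ht
    rw [Real.rpow_one, Real.rpow_zero]
    ring_nf
  have hcont : ContinuousWithinAt (fun t : ℝ => -(t / a + 1 / a ^ 2) * Real.exp (-(a * t)))
      (Ici 0) 0 := by
    apply Continuous.continuousWithinAt
    continuity
  have := integral_Ioi_of_hasDerivAt_of_tendsto hcont hderiv (integrableOn_mul_exp ha) htend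
  rw [this]
  norm_num

lemma lintegral_kernel {a : ℝ} (ha : 0 < a) {c : ℝ} (hc : 0 ≤ c) :
    ∫⁻ t in Ioi (0:ℝ), ENNReal.ofReal (c * (t * Real.exp (-(a * t))))
      = ENNReal.ofReal (c / a ^ 2) := by
  have hint : Integrable (fun t : ℝ => c * (t * Real.exp (-(a * t))))
      (volume.restrict (Ioi 0)) := (integrableOn_mul_exp ha).const_mul c
  have hnn : 0 ≤ᶠ[ae (volume.restrict (Ioi (0:ℝ)))] fun t => c * (t * Real.exp (-(a * t))) := by
    filter_upwards [ae_restrict_mem measurableSet_Ioi] with t ht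
    have : (0:ℝ) < t := ht
    positivity
  rw [← ofReal_integral_eq_lintegral_ofReal hint hnn, integral_const_mul,
    integral_mul_exp ha]
  congr 1
  ring


lemma inv_bb_le (n : ℕ) : 1 / bb n ≤ (1 / 16 : ℝ) ^ n := by
  rw [bb, one_div_pow]
  apply one_div_le_one_div_of_le (by positivity)
  exact pow_le_pow_right₀ (by norm_num) (by omega)

/-- pointwise decay bound -/
lemma bb_exp_le {t : ℝ} (ht : 0 < t) (n : ℕ) :
    bb n * Real.exp (-(bb n * t)) ≤ (4 / t ^ 2) * (1 / 16) ^ n := by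
  have hb := bb_pos n
  have hy : (0:ℝ) < bb n * t := by positivity
  have hexp : (bb n * t) ^ 2 / 4 ≤ Real.exp (bb n * t) := by
    have h1 : (bb n * t) / 2 + 1 ≤ Real.exp ((bb n * t) / 2) := Real.add_one_le_exp _
    have h2 : Real.exp (bb n * t) = Real.exp ((bb n * t)/2) ^ 2 := by
      rw [← Real.exp_nat_mul]; norm_num; ring_nf
    nlinarith [Real.exp_pos ((bb n * t)/2)]
  have hexp' : Real.exp (-(bb n * t)) ≤ 4 / (bb n * t) ^ 2 := by
    rw [Real.exp_neg, inv_le_iff_one_le_mul₀ (Real.exp_pos _)]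
    rw [div_mul_eq_mul_div, le_div_iff₀ (by positivity)]
    nlinarith
  calc bb n * Real.exp (-(bb n * t)) ≤ bb n * (4 / (bb n * t) ^ 2) := by
        exact mul_le_mul_of_nonneg_left hexp' hb.le
    _ = (4 / t ^ 2) * (1 / bb n) := by field_simp
    _ ≤ (4 / t ^ 2) * (1 / 16) ^ n := by
        exact mul_le_mul_of_nonneg_left (inv_bb_le n) (by positivity)

lemma base_nonneg (t : ℝ) (n : ℕ) : 0 ≤ bb n * Real.exp (-(bb n * t)) :=
  mul_nonneg (bb_pos n).le (Real.exp_pos _).le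

lemma summable_base {t : ℝ} (ht : 0 < t) :
    Summable (fun n => bb n * Real.exp (-(bb n * t))) := by
  refine Summable.of_nonneg_of_le (fun n => base_nonneg t n) (fun n => bb_exp_le ht n) ?_
  exact (summable_geometric_of_lt_one (by norm_num) (by norm_num)).mul_left _

lemma summable_xabs {d : ℕ → ℝ} {D : ℝ} (hD : ∀ n, |d n| ≤ D) {t : ℝ} (ht : 0 < t) :
    Summable (fun n => bb n * Real.exp (-(bb n * t)) * |d n|) := by
  refine Summable.of_nonneg_of_le
    (fun n => mul_nonneg (base_nonneg t n) (abs_nonneg _))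
    (fun n => mul_le_mul_of_nonneg_left (hD n) (base_nonneg t n))
    ((summable_base ht).mul_right D)

lemma summable_x {d : ℕ → ℝ} {D : ℝ} (hD : ∀ n, |d n| ≤ D) {t : ℝ} (ht : 0 < t) :
    Summable (fun n => bb n * Real.exp (-(bb n * t)) * d n) := by
  have := summable_xabs hD ht
  refine Summable.of_abs ?_
  refine this.congr fun n => ?_
  rw [abs_mul, abs_of_nonneg (base_nonneg t n)]

lemma summable_geo_one : Summable (fun k : ℕ => ((1:ℝ)/16) ^ (k+1)) := by
  simp_rw [pow_succ]
  exact (summable_geometric_of_lt_one (by norm_num) (by norm_num)).mul_right _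

lemma tsum_geo_one : ∑' k : ℕ, ((1:ℝ)/16) ^ (k+1) = 1/15 := by
  simp_rw [pow_succ]
  rw [tsum_mul_right, tsum_geometric_of_lt_one (by norm_num) (by norm_num)]
  norm_num

lemma sum_range_geo_le (m : ℕ) : ∑ n ∈ Finset.range m, ((1:ℝ)/16) ^ (m - n) ≤ 1/15 := by
  have := Finset.sum_range_reflect (fun n => ((1:ℝ)/16) ^ (m - n)) m
  rw [← this]
  have heq : ∀ j ∈ Finset.range m, ((1:ℝ)/16) ^ (m - (m - 1 - j)) = ((1:ℝ)/16) ^ (j+1) := by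
    intro j hj
    rw [Finset.mem_range] at hj
    congr 1
    omega
  rw [Finset.sum_congr rfl heq]
  calc ∑ j ∈ Finset.range m, ((1:ℝ)/16) ^ (j+1)
      ≤ ∑' k : ℕ, ((1:ℝ)/16) ^ (k+1) := Summable.sum_le_tsum _ (fun i _ => by positivity) summable_geo_one
    _ = 1/15 := tsum_geo_one


/-- The matrix coefficient `c_{mn} = b_m b_n / (b_m + b_n)^2`. -/
noncomputable def cc (m n : ℕ) : ℝ := bb m * bb n / (bb m + bb n) ^ 2

lemma cc_nonneg (m n : ℕ) : 0 ≤ cc m n := by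
  have h1 := bb_pos m; have h2 := bb_pos n
  rw [cc]; positivity

lemma cc_symm (m n : ℕ) : cc m n = cc n m := by rw [cc, cc, mul_comm, add_comm]

lemma cc_diag (n : ℕ) : cc n n = 1/4 := by
  have h := bb_pos n
  rw [cc]; field_simp; ring

lemma bb_ratio {m n : ℕ} (h : m < n) : bb m / bb n = (1/16 : ℝ) ^ (n - m) := by
  have hkey : (16:ℝ) ^ (n+2) = 16 ^ (m+2) * 16 ^ (n-m) := by
    rw [← pow_add]; congr 1; omega
  rw [bb, bb, hkey, div_mul_cancel_left₀ (by positivity : (0:ℝ) < 16 ^ (m+2)).ne',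
    one_div_pow, one_div]

lemma cc_le_off {m n : ℕ} (h : m < n) : cc m n ≤ (1/16 : ℝ) ^ (n - m) := by
  have h1 := bb_pos m; have h2 := bb_pos n
  rw [← bb_ratio h, cc]
  rw [div_le_div_iff₀ (by positivity) (by positivity)]
  nlinarith [sq_nonneg (bb m + bb n), sq_nonneg (bb m)]

/-- off-diagonal dominating kernel -/
noncomputable def od (m n : ℕ) : ℝ := if m = n then 0 else (1/16 : ℝ) ^ (max m n - min m n)

lemma od_nonneg (m n : ℕ) : 0 ≤ od m n := by rw [od]; split_ifs <;> positivity

lemma od_symm (m n : ℕ) : od m n = od n m := by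
  rw [od, od]
  by_cases h : m = n
  · simp [h]
  · rw [if_neg h, if_neg (Ne.symm h), max_comm, min_comm]

lemma cc_le_od {m n : ℕ} (h : m ≠ n) : cc m n ≤ od m n := by
  rcases lt_or_gt_of_ne h with hlt | hgt
  · rw [od, if_neg h, max_eq_right hlt.le, min_eq_left hlt.le]
    exact cc_le_off hlt
  · rw [od, if_neg h, max_eq_left hgt.le, min_eq_right hgt.le, cc_symm]
    exact cc_le_off hgt

lemma od_le (m n : ℕ) : od m n ≤
    (if n < m then ((1:ℝ)/16) ^ (m - n) else 0) + (if m < n then ((1:ℝ)/16) ^ (n - m) else 0) := by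
  rcases lt_trichotomy m n with h | h | h
  · rw [od, if_neg h.ne, max_eq_right h.le, min_eq_left h.le, if_neg (by omega), if_pos h]
    simp
  · simp [od, h]
  · rw [od, if_neg h.ne', max_eq_left h.le, min_eq_right h.le, if_pos h, if_neg (by omega)]
    simp

lemma summable_ite_lt (m : ℕ) :
    Summable (fun n => if n < m then ((1:ℝ)/16) ^ (m - n) else 0) := by
  apply summable_of_ne_finset_zero (s := Finset.range m)
  intro n hn
  rw [Finset.mem_range] at hn
  rw [if_neg hn]

lemma sum_ite_lt_le (m : ℕ) (s : Finset ℕ) :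
    ∑ n ∈ s, (if n < m then ((1:ℝ)/16) ^ (m - n) else 0) ≤ 1/15 := by
  calc ∑ n ∈ s, (if n < m then ((1:ℝ)/16) ^ (m - n) else 0)
      ≤ ∑' n : ℕ, (if n < m then ((1:ℝ)/16) ^ (m - n) else 0) :=
        Summable.sum_le_tsum s (fun n _ => by split_ifs <;> positivity) (summable_ite_lt m)
    _ = ∑ n ∈ Finset.range m, (if n < m then ((1:ℝ)/16) ^ (m - n) else 0) := by
        apply tsum_eq_sum
        intro n hn
        rw [Finset.mem_range] at hn
        rw [if_neg hn]
    _ = ∑ n ∈ Finset.range m, ((1:ℝ)/16) ^ (m - n) := by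
        apply Finset.sum_congr rfl
        intro n hn
        rw [Finset.mem_range] at hn
        rw [if_pos hn]
    _ ≤ 1/15 := sum_range_geo_le m

lemma summable_ite_gt (m : ℕ) :
    Summable (fun n => if m < n then ((1:ℝ)/16) ^ (n - m) else 0) := by
  refine Summable.of_nonneg_of_le (fun n => by split_ifs <;> positivity) (fun n => ?_)
    ((summable_geometric_of_lt_one (r := (1:ℝ)/16) (by norm_num) (by norm_num)).mul_left
      ((16:ℝ) ^ m))
  split_ifs with h
  · have hkey : (16:ℝ) ^ n = 16 ^ m * 16 ^ (n-m) := by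
      rw [← pow_add]; congr 1; omega
    rw [one_div_pow, one_div_pow, hkey, mul_one_div,
      div_mul_cancel_left₀ (by positivity : (0:ℝ) < 16 ^ m).ne', one_div]
  · positivity

lemma sum_ite_gt_le (m : ℕ) (s : Finset ℕ) :
    ∑ n ∈ s, (if m < n then ((1:ℝ)/16) ^ (n - m) else 0) ≤ 1/15 := by
  have hsum := summable_ite_gt m
  calc ∑ n ∈ s, (if m < n then ((1:ℝ)/16) ^ (n - m) else 0)
      ≤ ∑' n : ℕ, (if m < n then ((1:ℝ)/16) ^ (n - m) else 0) :=
        Summable.sum_le_tsum s (fun n _ => by split_ifs <;> positivity) hsum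
    _ = 1/15 := by
        rw [← Summable.sum_add_tsum_nat_add (m+1) hsum]
        have h0 : ∑ n ∈ Finset.range (m+1), (if m < n then ((1:ℝ)/16) ^ (n - m) else 0) = 0 := by
          apply Finset.sum_eq_zero
          intro n hn
          rw [Finset.mem_range] at hn
          rw [if_neg (by omega)]
        rw [h0, zero_add]
        have : ∀ k : ℕ, (if m < k + (m+1) then ((1:ℝ)/16) ^ (k + (m+1) - m) else 0)
            = ((1:ℝ)/16) ^ (k+1) := by
          intro k
          rw [if_pos (by omega)]
          congr 1
          omega
        rw [tsum_congr this, tsum_geo_one]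

lemma od_rowsum (m : ℕ) (s : Finset ℕ) : ∑ n ∈ s, od m n ≤ 2/15 := by
  calc ∑ n ∈ s, od m n
      ≤ ∑ n ∈ s, ((if n < m then ((1:ℝ)/16) ^ (m - n) else 0)
          + (if m < n then ((1:ℝ)/16) ^ (n - m) else 0)) :=
        Finset.sum_le_sum (fun n _ => od_le m n)
    _ = _ + _ := Finset.sum_add_distrib
    _ ≤ 1/15 + 1/15 := add_le_add (sum_ite_lt_le m s) (sum_ite_gt_le m s)
    _ = 2/15 := by norm_num


lemma abs_mul_le_half (a b : ℝ) : |a| * |b| ≤ (a^2 + b^2)/2 := by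
  nlinarith [sq_nonneg (|a| - |b|), sq_abs a, sq_abs b, abs_nonneg a, abs_nonneg b]

/-- Finite Schur-type lower bound: `Q_M ≥ (7/60) σ_M`. -/
lemma schur_low (d : ℕ → ℝ) (M : ℕ) :
    7/60 * ∑ n ∈ Finset.range M, (d n)^2 ≤
      ∑ m ∈ Finset.range M, ∑ n ∈ Finset.range M, cc m n * d m * d n := by
  classical
  set r := Finset.range M
  have hsplit : ∑ m ∈ r, ∑ n ∈ r, cc m n * d m * d n
      = (∑ m ∈ r, ∑ n ∈ r, (if m = n then cc m n * d m * d n else 0))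
        + ∑ m ∈ r, ∑ n ∈ r, (if m = n then 0 else cc m n * d m * d n) := by
    rw [← Finset.sum_add_distrib]
    apply Finset.sum_congr rfl
    intro m _
    rw [← Finset.sum_add_distrib]
    apply Finset.sum_congr rfl
    intro n _
    split_ifs <;> ring
  have hdiag : ∑ m ∈ r, ∑ n ∈ r, (if m = n then cc m n * d m * d n else 0)
      = 1/4 * ∑ n ∈ r, (d n)^2 := by
    rw [Finset.mul_sum]
    apply Finset.sum_congr rfl
    intro m hm
    rw [Finset.sum_ite_eq r m (fun n => cc m n * d m * d n), if_pos hm, cc_diag]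
    ring
  have hoffabs : |∑ m ∈ r, ∑ n ∈ r, (if m = n then 0 else cc m n * d m * d n)|
      ≤ 2/15 * ∑ n ∈ r, (d n)^2 := by
    calc |∑ m ∈ r, ∑ n ∈ r, (if m = n then 0 else cc m n * d m * d n)|
        ≤ ∑ m ∈ r, |∑ n ∈ r, (if m = n then 0 else cc m n * d m * d n)| :=
          Finset.abs_sum_le_sum_abs _ _
      _ ≤ ∑ m ∈ r, ∑ n ∈ r, |if m = n then 0 else cc m n * d m * d n| :=
          Finset.sum_le_sum (fun m _ => Finset.abs_sum_le_sum_abs _ _)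
      _ ≤ ∑ m ∈ r, ∑ n ∈ r, od m n * ((d m)^2 + (d n)^2)/2 := by
          apply Finset.sum_le_sum; intro m _; apply Finset.sum_le_sum; intro n _
          by_cases h : m = n
          · rw [if_pos h, abs_zero, h, od]
            simp only [if_pos rfl]
            positivity
          · rw [if_neg h, abs_mul, abs_mul, abs_of_nonneg (cc_nonneg m n)]
            calc cc m n * |d m| * |d n| ≤ od m n * (|d m| * |d n|) := by
                  rw [mul_assoc]
                  exact mul_le_mul_of_nonneg_right (cc_le_od h)
                    (mul_nonneg (abs_nonneg _) (abs_nonneg _))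
              _ ≤ od m n * (((d m)^2 + (d n)^2)/2) :=
                  mul_le_mul_of_nonneg_left (abs_mul_le_half _ _) (od_nonneg m n)
              _ = od m n * ((d m)^2 + (d n)^2)/2 := by ring
      _ = (∑ m ∈ r, ∑ n ∈ r, od m n * (d m)^2 / 2)
            + ∑ m ∈ r, ∑ n ∈ r, od m n * (d n)^2 / 2 := by
          rw [← Finset.sum_add_distrib]
          apply Finset.sum_congr rfl; intro m _
          rw [← Finset.sum_add_distrib]
          apply Finset.sum_congr rfl; intro n _
          ring
      _ = (∑ m ∈ r, ∑ n ∈ r, od m n * (d m)^2 / 2)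
            + ∑ m ∈ r, ∑ n ∈ r, od m n * (d m)^2 / 2 := by
          congr 1
          rw [Finset.sum_comm]
          apply Finset.sum_congr rfl; intro m _
          apply Finset.sum_congr rfl; intro n _
          rw [od_symm]
      _ ≤ 1/15 * ∑ n ∈ r, (d n)^2 + 1/15 * ∑ n ∈ r, (d n)^2 := by
          have hbd : ∑ m ∈ r, ∑ n ∈ r, od m n * (d m)^2 / 2 ≤ 1/15 * ∑ n ∈ r, (d n)^2 := by
            calc ∑ m ∈ r, ∑ n ∈ r, od m n * (d m)^2 / 2
                = ∑ m ∈ r, (d m)^2/2 * ∑ n ∈ r, od m n := by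
                  apply Finset.sum_congr rfl; intro m _
                  rw [Finset.mul_sum]
                  apply Finset.sum_congr rfl; intro n _
                  ring
              _ ≤ ∑ m ∈ r, (d m)^2/2 * (2/15) := by
                  apply Finset.sum_le_sum; intro m _
                  exact mul_le_mul_of_nonneg_left (od_rowsum m r) (by positivity)
              _ = 1/15 * ∑ n ∈ r, (d n)^2 := by
                  rw [Finset.mul_sum]
                  apply Finset.sum_congr rfl; intro m _
                  ring
          exact add_le_add hbd hbd
      _ = 2/15 * ∑ n ∈ r, (d n)^2 := by ring
  have hsq : (0:ℝ) ≤ ∑ n ∈ r, (d n)^2 := Finset.sum_nonneg fun n _ => sq_nonneg _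
  have := neg_abs_le (∑ m ∈ r, ∑ n ∈ r, (if m = n then 0 else cc m n * d m * d n))
  linarith [hsplit, hdiag, hoffabs]


noncomputable def ccB (m n : ℕ) : ℝ := (if m = n then (1/4:ℝ) else 0) + od m n

lemma cc_le_ccB (m n : ℕ) : cc m n ≤ ccB m n := by
  rw [ccB]
  by_cases h : m = n
  · rw [if_pos h, h, cc_diag, od]
    simp
  · rw [if_neg h, zero_add]
    exact cc_le_od h

lemma ccB_nonneg (m n : ℕ) : 0 ≤ ccB m n :=
  add_nonneg (by split_ifs <;> norm_num) (od_nonneg m n)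

lemma ccB_symm (m n : ℕ) : ccB m n = ccB n m := by
  rw [ccB, ccB, od_symm]
  by_cases h : m = n
  · simp [h]
  · rw [if_neg h, if_neg (Ne.symm h)]

lemma tsum_ite_lt_le (m : ℕ) :
    ∑' n : ℕ, (if n < m then ((1:ℝ)/16) ^ (m - n) else 0) ≤ 1/15 :=
  Summable.tsum_le_of_sum_le (summable_ite_lt m) (fun s => sum_ite_lt_le m s)

lemma tsum_ite_gt_le (m : ℕ) :
    ∑' n : ℕ, (if m < n then ((1:ℝ)/16) ^ (n - m) else 0) ≤ 1/15 :=
  Summable.tsum_le_of_sum_le (summable_ite_gt m) (fun s => sum_ite_gt_le m s)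

/-- key row sum bound in `ℝ≥0∞` -/
lemma rowsum_le (m : ℕ) : ∑' n : ℕ, ENNReal.ofReal (ccB m n) ≤ ENNReal.ofReal (23/60) := by
  have hped : ∀ n : ℕ, ENNReal.ofReal (ccB m n)
      = ENNReal.ofReal (if m = n then (1/4:ℝ) else 0) + ENNReal.ofReal (od m n) := by
    intro n
    rw [ccB, ENNReal.ofReal_add (by split_ifs <;> norm_num) (od_nonneg m n)]
  rw [tsum_congr hped, ENNReal.tsum_add]
  have h1 : ∑' n : ℕ, ENNReal.ofReal (if m = n then (1/4:ℝ) else 0) = ENNReal.ofReal (1/4) := by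
    rw [tsum_eq_single m]
    · rw [if_pos rfl]
    · intro n hn
      rw [if_neg (Ne.symm hn)]
      simp
  have h2 : ∑' n : ℕ, ENNReal.ofReal (od m n) ≤ ENNReal.ofReal (2/15) := by
    have hle : ∀ n : ℕ, ENNReal.ofReal (od m n)
        ≤ ENNReal.ofReal (if n < m then ((1:ℝ)/16) ^ (m - n) else 0)
          + ENNReal.ofReal (if m < n then ((1:ℝ)/16) ^ (n - m) else 0) := by
      intro n
      calc ENNReal.ofReal (od m n)
          ≤ ENNReal.ofReal ((if n < m then ((1:ℝ)/16) ^ (m - n) else 0)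
              + (if m < n then ((1:ℝ)/16) ^ (n - m) else 0)) :=
            ENNReal.ofReal_le_ofReal (od_le m n)
        _ ≤ _ := ENNReal.ofReal_add_le
    calc ∑' n : ℕ, ENNReal.ofReal (od m n)
        ≤ ∑' n : ℕ, (ENNReal.ofReal (if n < m then ((1:ℝ)/16) ^ (m - n) else 0)
            + ENNReal.ofReal (if m < n then ((1:ℝ)/16) ^ (n - m) else 0)) :=
          ENNReal.tsum_le_tsum hle
      _ = (∑' n : ℕ, ENNReal.ofReal (if n < m then ((1:ℝ)/16) ^ (m - n) else 0))
            + ∑' n : ℕ, ENNReal.ofReal (if m < n then ((1:ℝ)/16) ^ (n - m) else 0) :=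
          ENNReal.tsum_add
      _ ≤ ENNReal.ofReal (1/15) + ENNReal.ofReal (1/15) := by
          apply add_le_add
          · rw [← ENNReal.ofReal_tsum_of_nonneg (fun n => by split_ifs <;> positivity)
              (summable_ite_lt m)]
            exact ENNReal.ofReal_le_ofReal (tsum_ite_lt_le m)
          · rw [← ENNReal.ofReal_tsum_of_nonneg (fun n => by split_ifs <;> positivity)
              (summable_ite_gt m)]
            exact ENNReal.ofReal_le_ofReal (tsum_ite_gt_le m)
      _ = ENNReal.ofReal (2/15) := by
          rw [← ENNReal.ofReal_add (by norm_num) (by norm_num)]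
          norm_num
  rw [h1]
  calc ENNReal.ofReal (1/4) + ∑' n : ℕ, ENNReal.ofReal (od m n)
      ≤ ENNReal.ofReal (1/4) + ENNReal.ofReal (2/15) := add_le_add_right h2 _
    _ = ENNReal.ofReal (23/60) := by
        rw [← ENNReal.ofReal_add (by norm_num) (by norm_num)]
        norm_num


lemma xa_eq_kernel (d : ℕ → ℝ) (m n : ℕ) (t : ℝ) :
    t * (bb m * Real.exp (-(bb m * t)) * |d m|) * (bb n * Real.exp (-(bb n * t)) * |d n|)
      = (bb m * bb n * (|d m| * |d n|)) * (t * Real.exp (-((bb m + bb n) * t))) := by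
  rw [show -((bb m + bb n) * t) = -(bb m * t) + -(bb n * t) by ring, Real.exp_add]
  ring

lemma meas_G (d : ℕ → ℝ) (m n : ℕ) :
    Measurable (fun t : ℝ => ENNReal.ofReal
      ((bb m * bb n * (|d m| * |d n|)) * (t * Real.exp (-((bb m + bb n) * t))))) := by
  apply ENNReal.measurable_ofReal.comp
  fun_prop

lemma lint_G (d : ℕ → ℝ) (m n : ℕ) :
    ∫⁻ t in Ioi (0:ℝ), ENNReal.ofReal
        ((bb m * bb n * (|d m| * |d n|)) * (t * Real.exp (-((bb m + bb n) * t))))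
      = ENNReal.ofReal (cc m n * (|d m| * |d n|)) := by
  have ha : 0 < bb m + bb n := by have := bb_pos m; have := bb_pos n; linarith
  have hc : 0 ≤ bb m * bb n * (|d m| * |d n|) := by
    have := bb_pos m; have := bb_pos n; positivity
  rw [lintegral_kernel ha hc]
  congr 1
  rw [cc]
  ring

/-- Pointwise-in-ω upper bound. -/
lemma upper_pt (d : ℕ → ℝ) :
    (∫⁻ t in Ioi (0:ℝ),
        ENNReal.ofReal (t * (∑' n, bb n * Real.exp (-(bb n * t)) * d n)^2))
      ≤ ENNReal.ofReal (23/60) * ∑' n, ENNReal.ofReal ((d n)^2) := by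
  -- Step A: pointwise bound by double series
  have stepA : ∀ t ∈ Ioi (0:ℝ),
      ENNReal.ofReal (t * (∑' n, bb n * Real.exp (-(bb n * t)) * d n)^2)
        ≤ ∑' m : ℕ, ∑' n : ℕ, ENNReal.ofReal
            ((bb m * bb n * (|d m| * |d n|)) * (t * Real.exp (-((bb m + bb n) * t)))) := by
    intro t ht
    have ht' : (0:ℝ) < t := ht
    set x : ℕ → ℝ := fun n => bb n * Real.exp (-(bb n * t)) * d n with hx
    set xa : ℕ → ℝ := fun n => bb n * Real.exp (-(bb n * t)) * |d n| with hxa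
    have hxa_nonneg : ∀ n, 0 ≤ xa n := fun n => mul_nonneg (base_nonneg t n) (abs_nonneg _)
    have habs_x : ∀ n, |x n| = xa n := by
      intro n
      rw [hx, hxa, abs_mul, abs_of_nonneg (base_nonneg t n)]
    by_cases hs : Summable xa
    · have hsx : Summable x := by
        refine Summable.of_abs ?_
        exact hs.congr (fun n => (habs_x n).symm)
      have habs : |∑' n, x n| ≤ ∑' n, xa n := by
        calc |∑' n, x n| = ‖∑' n, x n‖ := rfl
          _ ≤ ∑' n, ‖x n‖ := norm_tsum_le_tsum_norm (by simpa [habs_x] using hs)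
          _ = ∑' n, xa n := by
              apply tsum_congr; intro n; rw [Real.norm_eq_abs, habs_x]
      have hsq : (∑' n, x n)^2 ≤ (∑' n, xa n)^2 := by
        rw [← sq_abs (∑' n, x n)]
        exact pow_le_pow_left₀ (abs_nonneg _) habs 2
      calc ENNReal.ofReal (t * (∑' n, x n)^2)
          ≤ ENNReal.ofReal (t * (∑' n, xa n)^2) :=
            ENNReal.ofReal_le_ofReal (mul_le_mul_of_nonneg_left hsq ht'.le)
        _ = ENNReal.ofReal t * (∑' n, ENNReal.ofReal (xa n)) * (∑' n, ENNReal.ofReal (xa n)) := by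
            have hTnn : 0 ≤ ∑' n, xa n := tsum_nonneg hxa_nonneg
            rw [pow_two, ← mul_assoc, ENNReal.ofReal_mul (mul_nonneg ht'.le hTnn),
              ENNReal.ofReal_mul ht'.le, ENNReal.ofReal_tsum_of_nonneg hxa_nonneg hs]
        _ = ∑' m : ℕ, ∑' n : ℕ, (ENNReal.ofReal t
              * ENNReal.ofReal (xa m) * ENNReal.ofReal (xa n)) := by
            calc ENNReal.ofReal t * (∑' n, ENNReal.ofReal (xa n)) * (∑' n, ENNReal.ofReal (xa n))
                = (∑' m, ENNReal.ofReal t * ENNReal.ofReal (xa m)) * (∑' n, ENNReal.ofReal (xa n)) := by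
                  rw [ENNReal.tsum_mul_left]
              _ = ∑' m, (ENNReal.ofReal t * ENNReal.ofReal (xa m) * (∑' n, ENNReal.ofReal (xa n))) :=
                  (ENNReal.tsum_mul_right).symm
              _ = _ := tsum_congr fun m => (ENNReal.tsum_mul_left).symm
        _ = _ := by
            apply tsum_congr; intro m
            apply tsum_congr; intro n
            have h1 : (0:ℝ) ≤ t * xa m := mul_nonneg ht'.le (hxa_nonneg m)
            rw [← ENNReal.ofReal_mul ht'.le, ← ENNReal.ofReal_mul h1,
              xa_eq_kernel]
    · have hsx : ¬ Summable x := by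
        intro hsx
        exact hs (hsx.abs.congr habs_x)
      rw [tsum_eq_zero_of_not_summable hsx]
      simp
  -- Step B: integrate
  calc (∫⁻ t in Ioi (0:ℝ),
        ENNReal.ofReal (t * (∑' n, bb n * Real.exp (-(bb n * t)) * d n)^2))
      ≤ ∫⁻ t in Ioi (0:ℝ), ∑' m : ℕ, ∑' n : ℕ, ENNReal.ofReal
          ((bb m * bb n * (|d m| * |d n|)) * (t * Real.exp (-((bb m + bb n) * t)))) := by
        apply lintegral_mono_ae
        filter_upwards [ae_restrict_mem measurableSet_Ioi] with t ht
        exact stepA t ht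
    _ = ∑' m : ℕ, ∑' n : ℕ, ∫⁻ t in Ioi (0:ℝ), ENNReal.ofReal
          ((bb m * bb n * (|d m| * |d n|)) * (t * Real.exp (-((bb m + bb n) * t)))) := by
        rw [lintegral_tsum (fun m => (Measurable.ennreal_tsum
          (fun n => meas_G d m n)).aemeasurable)]
        apply tsum_congr; intro m
        rw [lintegral_tsum (fun n => (meas_G d m n).aemeasurable)]
    _ = ∑' m : ℕ, ∑' n : ℕ, ENNReal.ofReal (cc m n * (|d m| * |d n|)) := by
        apply tsum_congr; intro m
        apply tsum_congr; intro n
        exact lint_G d m n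
    _ ≤ ENNReal.ofReal (23/60) * ∑' n, ENNReal.ofReal ((d n)^2) := by
        -- Step C : Schur bound
        have hterm : ∀ m n : ℕ, ENNReal.ofReal (cc m n * (|d m| * |d n|))
            ≤ ENNReal.ofReal (ccB m n * ((d m)^2/2))
              + ENNReal.ofReal (ccB m n * ((d n)^2/2)) := by
          intro m n
          calc ENNReal.ofReal (cc m n * (|d m| * |d n|))
              ≤ ENNReal.ofReal (ccB m n * ((d m)^2/2) + ccB m n * ((d n)^2/2)) := by
                apply ENNReal.ofReal_le_ofReal
                have h1 : cc m n * (|d m| * |d n|) ≤ ccB m n * ((d m)^2 + (d n)^2)/2 := by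
                  calc cc m n * (|d m| * |d n|) ≤ ccB m n * (|d m| * |d n|) :=
                      mul_le_mul_of_nonneg_right (cc_le_ccB m n)
                        (mul_nonneg (abs_nonneg _) (abs_nonneg _))
                    _ ≤ ccB m n * (((d m)^2 + (d n)^2)/2) :=
                      mul_le_mul_of_nonneg_left (abs_mul_le_half _ _) (ccB_nonneg m n)
                    _ = ccB m n * ((d m)^2 + (d n)^2)/2 := by ring
                linarith
            _ ≤ _ := ENNReal.ofReal_add_le
        calc ∑' m : ℕ, ∑' n : ℕ, ENNReal.ofReal (cc m n * (|d m| * |d n|))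
            ≤ ∑' m : ℕ, ∑' n : ℕ, (ENNReal.ofReal (ccB m n * ((d m)^2/2))
                + ENNReal.ofReal (ccB m n * ((d n)^2/2))) :=
              ENNReal.tsum_le_tsum (fun m => ENNReal.tsum_le_tsum (fun n => hterm m n))
          _ = (∑' m : ℕ, ∑' n : ℕ, ENNReal.ofReal (ccB m n * ((d m)^2/2)))
                + ∑' m : ℕ, ∑' n : ℕ, ENNReal.ofReal (ccB m n * ((d n)^2/2)) := by
              rw [← ENNReal.tsum_add]
              apply tsum_congr; intro m
              rw [← ENNReal.tsum_add]
          _ ≤ (∑' m : ℕ, ENNReal.ofReal ((d m)^2/2) * ENNReal.ofReal (23/60))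
                + ∑' n : ℕ, ENNReal.ofReal ((d n)^2/2) * ENNReal.ofReal (23/60) := by
              apply add_le_add
              · apply ENNReal.tsum_le_tsum; intro m
                calc ∑' n : ℕ, ENNReal.ofReal (ccB m n * ((d m)^2/2))
                    = ENNReal.ofReal ((d m)^2/2) * ∑' n : ℕ, ENNReal.ofReal (ccB m n) := by
                      rw [← ENNReal.tsum_mul_left]
                      apply tsum_congr; intro n
                      rw [← ENNReal.ofReal_mul (by positivity), mul_comm ((d m)^2/2)]
                  _ ≤ _ := mul_le_mul_right (rowsum_le m) _
              · rw [ENNReal.tsum_comm]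
                apply ENNReal.tsum_le_tsum; intro n
                calc ∑' m : ℕ, ENNReal.ofReal (ccB m n * ((d n)^2/2))
                    = ENNReal.ofReal ((d n)^2/2) * ∑' m : ℕ, ENNReal.ofReal (ccB n m) := by
                      rw [← ENNReal.tsum_mul_left]
                      apply tsum_congr; intro m
                      rw [← ENNReal.ofReal_mul (by positivity), mul_comm ((d n)^2/2), ccB_symm]
                  _ ≤ _ := mul_le_mul_right (rowsum_le n) _
          _ = ENNReal.ofReal (23/60) * ∑' n, ENNReal.ofReal ((d n)^2) := by
              have hhalf : ∀ n : ℕ, ENNReal.ofReal ((d n)^2/2) + ENNReal.ofReal ((d n)^2/2)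
                  = ENNReal.ofReal ((d n)^2) := by
                intro n
                rw [← ENNReal.ofReal_add (by positivity) (by positivity)]
                congr 1
                ring
              calc (∑' m : ℕ, ENNReal.ofReal ((d m)^2/2) * ENNReal.ofReal (23/60))
                    + ∑' n : ℕ, ENNReal.ofReal ((d n)^2/2) * ENNReal.ofReal (23/60)
                  = ∑' n : ℕ, ENNReal.ofReal (23/60) *
                      (ENNReal.ofReal ((d n)^2/2) + ENNReal.ofReal ((d n)^2/2)) := by
                    rw [← ENNReal.tsum_add]
                    apply tsum_congr; intro n
                    ring
                _ = ∑' n : ℕ, ENNReal.ofReal (23/60) * ENNReal.ofReal ((d n)^2) := by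
                    apply tsum_congr; intro n
                    rw [hhalf n]
                _ = _ := ENNReal.tsum_mul_left


lemma x_mul_kernel (cm cn : ℝ) (m n : ℕ) (t : ℝ) :
    t * (bb m * Real.exp (-(bb m * t)) * cm) * (bb n * Real.exp (-(bb n * t)) * cn)
      = (bb m * bb n * (cm * cn)) * (t * Real.exp (-((bb m + bb n) * t))) := by
  rw [show -((bb m + bb n) * t) = -(bb m * t) + -(bb n * t) by ring, Real.exp_add]
  ring

/-- `∫ t (Σ_{n<M} x_n)² = Q_M`. -/
lemma qform_eq (d : ℕ → ℝ) (M : ℕ) :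
    ∫⁻ t in Ioi (0:ℝ), ENNReal.ofReal
        (t * (∑ n ∈ Finset.range M, bb n * Real.exp (-(bb n * t)) * d n)^2)
      = ENNReal.ofReal
          (∑ m ∈ Finset.range M, ∑ n ∈ Finset.range M, cc m n * d m * d n) := by
  have hpt : ∀ t : ℝ,
      t * (∑ n ∈ Finset.range M, bb n * Real.exp (-(bb n * t)) * d n)^2
        = ∑ m ∈ Finset.range M, ∑ n ∈ Finset.range M,
            (bb m * bb n * (d m * d n)) * (t * Real.exp (-((bb m + bb n) * t))) := by
    intro t
    rw [pow_two, Finset.sum_mul_sum, Finset.mul_sum]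
    apply Finset.sum_congr rfl; intro m _
    rw [Finset.mul_sum]
    apply Finset.sum_congr rfl; intro n _
    rw [← x_mul_kernel (d m) (d n) m n t]
    ring
  have hint : Integrable (fun t => ∑ m ∈ Finset.range M, ∑ n ∈ Finset.range M,
      (bb m * bb n * (d m * d n)) * (t * Real.exp (-((bb m + bb n) * t))))
      (volume.restrict (Ioi 0)) := by
    apply integrable_finset_sum
    intro m _
    apply integrable_finset_sum
    intro n _
    exact (integrableOn_mul_exp (by have := bb_pos m; have := bb_pos n; linarith)).const_mul _
  have hnn : 0 ≤ᶠ[ae (volume.restrict (Ioi (0:ℝ)))]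
      (fun t => ∑ m ∈ Finset.range M, ∑ n ∈ Finset.range M,
        (bb m * bb n * (d m * d n)) * (t * Real.exp (-((bb m + bb n) * t)))) := by
    filter_upwards [ae_restrict_mem measurableSet_Ioi] with t ht
    rw [← hpt]
    have ht' : (0:ℝ) < t := ht
    positivity
  calc ∫⁻ t in Ioi (0:ℝ), ENNReal.ofReal
        (t * (∑ n ∈ Finset.range M, bb n * Real.exp (-(bb n * t)) * d n)^2)
      = ∫⁻ t in Ioi (0:ℝ), ENNReal.ofReal (∑ m ∈ Finset.range M, ∑ n ∈ Finset.range M,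
          (bb m * bb n * (d m * d n)) * (t * Real.exp (-((bb m + bb n) * t)))) := by
        apply lintegral_congr
        intro t
        rw [hpt]
    _ = ENNReal.ofReal (∫ t in Ioi (0:ℝ), ∑ m ∈ Finset.range M, ∑ n ∈ Finset.range M,
          (bb m * bb n * (d m * d n)) * (t * Real.exp (-((bb m + bb n) * t)))) :=
        (ofReal_integral_eq_lintegral_ofReal hint hnn).symm
    _ = ENNReal.ofReal (∑ m ∈ Finset.range M, ∑ n ∈ Finset.range M, cc m n * d m * d n) := by
        congr 1
        rw [integral_finset_sum _ (fun m _ => integrable_finset_sum _ (fun n _ =>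
          (integrableOn_mul_exp (by have := bb_pos m; have := bb_pos n; linarith)).const_mul _))]
        apply Finset.sum_congr rfl; intro m _
        rw [integral_finset_sum _ (fun n _ =>
          (integrableOn_mul_exp (by have := bb_pos m; have := bb_pos n; linarith)).const_mul _)]
        apply Finset.sum_congr rfl; intro n _
        rw [integral_const_mul, integral_mul_exp
          (by have := bb_pos m; have := bb_pos n; linarith)]
        rw [cc]
        field_simp

lemma meas_W (d : ℕ → ℝ) (m n : ℕ) :
    Measurable (fun t : ℝ => ENNReal.ofReal
      (2 * (t * (bb m * Real.exp (-(bb m * t)) * |d m|)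
        * (bb n * Real.exp (-(bb n * t)) * |d n|)))) := by
  apply ENNReal.measurable_ofReal.comp
  fun_prop

lemma lint_G2 (d : ℕ → ℝ) (m n : ℕ) :
    ∫⁻ t in Ioi (0:ℝ), ENNReal.ofReal
        (2 * (t * (bb m * Real.exp (-(bb m * t)) * |d m|)
          * (bb n * Real.exp (-(bb n * t)) * |d n|)))
      = ENNReal.ofReal (2 * (cc m n * (|d m| * |d n|))) := by
  have ha : 0 < bb m + bb n := by have := bb_pos m; have := bb_pos n; linarith
  have hc : 0 ≤ 2 * (bb m * bb n * (|d m| * |d n|)) := by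
    have := bb_pos m; have := bb_pos n; positivity
  have hb : ∀ t : ℝ, 2 * (t * (bb m * Real.exp (-(bb m * t)) * |d m|)
      * (bb n * Real.exp (-(bb n * t)) * |d n|))
      = (2 * (bb m * bb n * (|d m| * |d n|))) * (t * Real.exp (-((bb m + bb n) * t))) := by
    intro t
    rw [show -((bb m + bb n) * t) = -(bb m * t) + -(bb n * t) by ring, Real.exp_add]
    ring
  simp_rw [hb]
  rw [lintegral_kernel ha hc]
  congr 1
  rw [cc]
  ring

/-- Pointwise-in-ω lower bound, assuming `d → 0`. -/
lemma lower_pt (d : ℕ → ℝ) (hd : Tendsto d atTop (𝓝 0)) :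
    ENNReal.ofReal (7/60) * ∑' n, ENNReal.ofReal ((d n)^2)
      ≤ ∫⁻ t in Ioi (0:ℝ),
          ENNReal.ofReal (t * (∑' n, bb n * Real.exp (-(bb n * t)) * d n)^2) := by
  set J := ∫⁻ t in Ioi (0:ℝ),
      ENNReal.ofReal (t * (∑' n, bb n * Real.exp (-(bb n * t)) * d n)^2) with hJ
  -- uniform bound on d
  have habs0 : Tendsto (fun n => |d n|) atTop (𝓝 0) := by
    have := hd.abs
    rwa [abs_zero] at this
  obtain ⟨D, hDmem⟩ := habs0.bddAbove_range
  have hDb : ∀ n, |d n| ≤ D := fun n => hDmem ⟨n, rfl⟩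
  have hD0 : 0 ≤ D := le_trans (abs_nonneg _) (hDb 0)
  -- key estimate
  have H1 : ∀ ε : ℝ, 0 < ε → ∃ M1 : ℕ, ∀ M ≥ M1,
      ENNReal.ofReal (7/60) * ENNReal.ofReal (∑ n ∈ Finset.range M, (d n)^2)
        ≤ J + ENNReal.ofReal ε := by
    intro ε hε
    -- choose M0 with (d n)^2 ≤ ε/4 * (15/16) * 15 for n ≥ M0  (any small bound works)
    obtain ⟨M0, hM0⟩ : ∃ M0 : ℕ, ∀ n ≥ M0, (d n)^2 ≤ ε := by
      have h2 : Tendsto (fun n => (d n)^2) atTop (𝓝 0) := by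
        simpa [sq] using (hd.mul hd)
      have h3 := h2.eventually_lt_const (show (0:ℝ) < ε by linarith)
      obtain ⟨M0, hM0⟩ := eventually_atTop.mp h3
      exact ⟨M0, fun n hn => (hM0 n hn).le⟩
    -- choose M1 ≥ M0 handling the geometric-decay head term
    obtain ⟨M1', hM1'⟩ : ∃ M1' : ℕ, ∀ M ≥ M1',
        (M0 : ℝ) * D^2 * (16/15) * (1/16)^(M - M0) < ε / 4 := by
      have hgeo : Tendsto (fun M : ℕ => (M0 : ℝ) * D^2 * (16/15) * (1/16)^(M - M0))
          atTop (𝓝 0) := by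
        have h0 : Tendsto (fun k : ℕ => ((1:ℝ)/16)^k) atTop (𝓝 0) :=
          tendsto_pow_atTop_nhds_zero_of_lt_one (by norm_num) (by norm_num)
        have h1 : Tendsto (fun M : ℕ => ((1:ℝ)/16)^(M - M0)) atTop (𝓝 0) :=
          h0.comp (tendsto_sub_atTop_nat M0)
        simpa using h1.const_mul ((M0 : ℝ) * D^2 * (16/15))
      obtain ⟨M1', hM1'⟩ := eventually_atTop.mp
        (hgeo.eventually_lt_const (show (0:ℝ) < ε/4 by linarith))
      exact ⟨M1', hM1'⟩
    refine ⟨max M0 M1', fun M hM => ?_⟩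
    have hMM0 : M0 ≤ M := le_trans (le_max_left _ _) hM
    have hMM1 : M1' ≤ M := le_trans (le_max_right _ _) hM
    -- the cross-term function W
    set W : ℝ → ℝ≥0∞ := fun t => ∑ m ∈ Finset.range M, ∑' k : ℕ,
        ENNReal.ofReal (2 * (t * (bb m * Real.exp (-(bb m * t)) * |d m|)
          * (bb (k + M) * Real.exp (-(bb (k + M) * t)) * |d (k + M)|))) with hW
    have hWmeas : Measurable W := by
      apply Finset.measurable_sum
      intro m _
      exact Measurable.ennreal_tsum (fun k => meas_W d m (k + M))
    -- pointwise estimate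
    have hpt : ∀ t ∈ Ioi (0:ℝ),
        ENNReal.ofReal (t * (∑ n ∈ Finset.range M, bb n * Real.exp (-(bb n * t)) * d n)^2)
          ≤ ENNReal.ofReal (t * (∑' n, bb n * Real.exp (-(bb n * t)) * d n)^2) + W t := by
      intro t ht
      have ht' : (0:ℝ) < t := ht
      set x : ℕ → ℝ := fun n => bb n * Real.exp (-(bb n * t)) * d n with hx
      set xa : ℕ → ℝ := fun n => bb n * Real.exp (-(bb n * t)) * |d n| with hxa
      have hxa_nonneg : ∀ n, 0 ≤ xa n := fun n => mul_nonneg (base_nonneg t n) (abs_nonneg _)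
      have habs_x : ∀ n, |x n| = xa n := fun n => by
        rw [hx, hxa, abs_mul, abs_of_nonneg (base_nonneg t n)]
      have hsumx : Summable x := summable_x hDb ht'
      have hsumxa : Summable xa := summable_xabs hDb ht'
      set u : ℝ := ∑ n ∈ Finset.range M, x n with hu
      set v : ℝ := ∑' k : ℕ, x (k + M) with hv
      have huv : u + v = ∑' n, x n := Summable.sum_add_tsum_nat_add M hsumx
      -- real inequality
      have hreal : t * u^2 ≤ t * (u + v)^2 + 2 * t * (|u| * |v|) := by
        have h1 : -(|u| * |v|) ≤ u * v := by
          rw [← abs_mul]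
          exact neg_abs_le _
        have h2 : 2 * t * (-(|u| * |v|)) ≤ 2 * t * (u * v) :=
          mul_le_mul_of_nonneg_left h1 (by linarith)
        have h3 : 0 ≤ t * v^2 := mul_nonneg ht'.le (sq_nonneg v)
        nlinarith [h2, h3]
      -- bounds on |u| and |v|
      have hub : |u| ≤ ∑ n ∈ Finset.range M, xa n := by
        calc |u| ≤ ∑ n ∈ Finset.range M, |x n| := Finset.abs_sum_le_sum_abs _ _
          _ = ∑ n ∈ Finset.range M, xa n := Finset.sum_congr rfl (fun n _ => habs_x n)
      have hsumxa' : Summable (fun k => xa (k + M)) := (summable_nat_add_iff M).mpr hsumxa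
      have hvb : |v| ≤ ∑' k, xa (k + M) := by
        calc |v| = ‖∑' k, x (k + M)‖ := rfl
          _ ≤ ∑' k, ‖x (k + M)‖ := norm_tsum_le_tsum_norm (by
              simpa [habs_x] using hsumxa')
          _ = ∑' k, xa (k + M) := tsum_congr (fun k => by rw [Real.norm_eq_abs, habs_x])
      have hPnn : 0 ≤ ∑ n ∈ Finset.range M, xa n :=
        Finset.sum_nonneg (fun n _ => hxa_nonneg n)
      have hTnn : 0 ≤ ∑' k, xa (k + M) := tsum_nonneg (fun k => hxa_nonneg _)
      -- ENNReal chain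
      calc ENNReal.ofReal (t * u^2)
          ≤ ENNReal.ofReal (t * (u+v)^2 + 2 * t * (|u| * |v|)) := ENNReal.ofReal_le_ofReal hreal
        _ ≤ ENNReal.ofReal (t * (u+v)^2) + ENNReal.ofReal (2 * t * (|u| * |v|)) :=
            ENNReal.ofReal_add_le
        _ ≤ ENNReal.ofReal (t * (∑' n, x n)^2) + W t := by
            apply add_le_add
            · rw [huv]
            · -- cross term against W
              calc ENNReal.ofReal (2 * t * (|u| * |v|))
                  ≤ ENNReal.ofReal (2*t*(∑ n ∈ Finset.range M, xa n)*(∑' k, xa (k + M))) := by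
                    apply ENNReal.ofReal_le_ofReal
                    have h2t : (0:ℝ) ≤ 2*t := by linarith
                    have s1 : 2 * t * (|u| * |v|) = 2*t*(|u|) * (|v|) := by ring
                    rw [s1]
                    calc 2*t*(|u|) * (|v|) ≤ 2*t*(∑ n ∈ Finset.range M, xa n)*(|v|) := by
                          apply mul_le_mul_of_nonneg_right _ (abs_nonneg v)
                          exact mul_le_mul_of_nonneg_left hub h2t
                      _ ≤ 2*t*(∑ n ∈ Finset.range M, xa n)*(∑' k, xa (k + M)) := by
                          apply mul_le_mul_of_nonneg_left hvb
                          positivity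
                _ = (∑ m ∈ Finset.range M, ENNReal.ofReal (2*t) * ENNReal.ofReal (xa m))
                      * ∑' k, ENNReal.ofReal (xa (k + M)) := by
                    rw [ENNReal.ofReal_mul (by positivity), ENNReal.ofReal_mul (by positivity),
                      ENNReal.ofReal_tsum_of_nonneg (fun k => hxa_nonneg _) hsumxa',
                      ENNReal.ofReal_sum_of_nonneg (fun n _ => hxa_nonneg n), Finset.mul_sum]
                _ = ∑ m ∈ Finset.range M, ∑' k : ℕ,
                      ENNReal.ofReal (2*t) * ENNReal.ofReal (xa m) * ENNReal.ofReal (xa (k+M)) := by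
                    rw [Finset.sum_mul]
                    apply Finset.sum_congr rfl; intro m _
                    rw [ENNReal.tsum_mul_left]
                _ ≤ W t := by
                    rw [hW]
                    apply Finset.sum_le_sum; intro m _
                    apply ENNReal.tsum_le_tsum; intro k
                    rw [← ENNReal.ofReal_mul (mul_nonneg (by norm_num) ht'.le),
                      ← ENNReal.ofReal_mul
                        (mul_nonneg (mul_nonneg (by norm_num) ht'.le) (hxa_nonneg m))]
                    apply ENNReal.ofReal_le_ofReal
                    rw [hxa]
                    apply le_of_eq
                    ring
    -- integrate the pointwise estimate
    have hint : ENNReal.ofReal (∑ m ∈ Finset.range M, ∑ n ∈ Finset.range M, cc m n * d m * d n)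
        ≤ J + ∫⁻ t in Ioi (0:ℝ), W t := by
      rw [← qform_eq d M, hJ]
      calc ∫⁻ t in Ioi (0:ℝ), ENNReal.ofReal
            (t * (∑ n ∈ Finset.range M, bb n * Real.exp (-(bb n * t)) * d n)^2)
          ≤ ∫⁻ t in Ioi (0:ℝ),
              (ENNReal.ofReal (t * (∑' n, bb n * Real.exp (-(bb n * t)) * d n)^2) + W t) := by
            apply lintegral_mono_ae
            filter_upwards [ae_restrict_mem measurableSet_Ioi] with t ht
            exact hpt t ht
        _ = _ := lintegral_add_right _ hWmeas
    -- evaluate and bound ∫ W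
    have hWval : ∫⁻ t in Ioi (0:ℝ), W t ≤ ENNReal.ofReal ε := by
      have hWint : ∫⁻ t in Ioi (0:ℝ), W t
          = ∑ m ∈ Finset.range M, ∑' k : ℕ,
              ENNReal.ofReal (2 * (cc m (k + M) * (|d m| * |d (k + M)|))) := by
        rw [hW, lintegral_finset_sum _
          (fun m _ => Measurable.ennreal_tsum (fun k => meas_W d m (k+M)))]
        apply Finset.sum_congr rfl; intro m _
        rw [lintegral_tsum (fun k => (meas_W d m (k+M)).aemeasurable)]
        exact tsum_congr (fun k => lint_G2 d m (k+M))
      have hgeosum : ∀ c : ℝ, 0 ≤ c → ∑' k : ℕ, c * ((1:ℝ)/16)^k = c * (16/15) := by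
        intro c hc
        rw [tsum_mul_left, tsum_geometric_of_lt_one (by norm_num) (by norm_num)]
        norm_num
      have hsummgeo : ∀ c : ℝ, Summable (fun k : ℕ => c * ((1:ℝ)/16)^k) :=
        fun c => (summable_geometric_of_lt_one (by norm_num) (by norm_num)).mul_left c
      have hq : ∀ m ∈ Finset.range M,
          (∑' k : ℕ, ENNReal.ofReal (2 * (cc m (k + M) * (|d m| * |d (k + M)|))))
          ≤ ENNReal.ofReal (((1:ℝ)/16)^(M-m) * (d m)^2 * (16/15))
            + ENNReal.ofReal (((1:ℝ)/16)^(M-m) * ε * (16/15)) := by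
        intro m hm
        rw [Finset.mem_range] at hm
        have hcc : ∀ k : ℕ, cc m (k + M) ≤ ((1:ℝ)/16)^(M-m) * ((1:ℝ)/16)^k := by
          intro k
          have h1 : m < k + M := by omega
          calc cc m (k+M) ≤ ((1:ℝ)/16)^(k + M - m) := cc_le_off h1
            _ = ((1:ℝ)/16)^(M-m) * ((1:ℝ)/16)^k := by
                rw [← pow_add]
                congr 1
                omega
        have hterm : ∀ k : ℕ, 2 * (cc m (k + M) * (|d m| * |d (k + M)|))
            ≤ (((1:ℝ)/16)^(M-m) * (d m)^2) * ((1:ℝ)/16)^k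
              + (((1:ℝ)/16)^(M-m) * ((1:ℝ)/16)^k) * (d (k+M))^2 := by
          intro k
          have h2 : |d m| * |d (k+M)| ≤ ((d m)^2 + (d (k+M))^2)/2 := abs_mul_le_half _ _
          have h3 : (0:ℝ) ≤ |d m| * |d (k+M)| := mul_nonneg (abs_nonneg _) (abs_nonneg _)
          have h4 := hcc k
          have h5 : (0:ℝ) ≤ ((1:ℝ)/16)^(M-m) * ((1:ℝ)/16)^k := by positivity
          nlinarith [cc_nonneg m (k+M)]
        calc ∑' k : ℕ, ENNReal.ofReal (2 * (cc m (k + M) * (|d m| * |d (k + M)|)))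
            ≤ ∑' k : ℕ, (ENNReal.ofReal ((((1:ℝ)/16)^(M-m) * (d m)^2) * ((1:ℝ)/16)^k)
                + ENNReal.ofReal ((((1:ℝ)/16)^(M-m) * ((1:ℝ)/16)^k) * (d (k+M))^2)) := by
              apply ENNReal.tsum_le_tsum; intro k
              exact le_trans (ENNReal.ofReal_le_ofReal (hterm k)) ENNReal.ofReal_add_le
          _ = (∑' k : ℕ, ENNReal.ofReal ((((1:ℝ)/16)^(M-m) * (d m)^2) * ((1:ℝ)/16)^k))
                + ∑' k : ℕ, ENNReal.ofReal ((((1:ℝ)/16)^(M-m) * ((1:ℝ)/16)^k) * (d (k+M))^2) :=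
              ENNReal.tsum_add
          _ ≤ ENNReal.ofReal (((1:ℝ)/16)^(M-m) * (d m)^2 * (16/15))
                + ENNReal.ofReal (((1:ℝ)/16)^(M-m) * ε * (16/15)) := by
              apply add_le_add
              · rw [← ENNReal.ofReal_tsum_of_nonneg (fun k => by positivity) (hsummgeo _)]
                rw [hgeosum _ (by positivity)]
              · calc ∑' k : ℕ, ENNReal.ofReal ((((1:ℝ)/16)^(M-m) * ((1:ℝ)/16)^k) * (d (k+M))^2)
                    ≤ ∑' k : ℕ, ENNReal.ofReal ((((1:ℝ)/16)^(M-m) * ε) * ((1:ℝ)/16)^k) := by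
                      apply ENNReal.tsum_le_tsum; intro k
                      apply ENNReal.ofReal_le_ofReal
                      have h6 : (d (k+M))^2 ≤ ε := hM0 (k+M) (by omega)
                      have h7 : (0:ℝ) ≤ ((1:ℝ)/16)^(M-m) * ((1:ℝ)/16)^k := by positivity
                      calc (((1:ℝ)/16)^(M-m) * ((1:ℝ)/16)^k) * (d (k+M))^2
                          ≤ (((1:ℝ)/16)^(M-m) * ((1:ℝ)/16)^k) * ε :=
                            mul_le_mul_of_nonneg_left h6 h7
                        _ = (((1:ℝ)/16)^(M-m) * ε) * ((1:ℝ)/16)^k := by ring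
                  _ = ENNReal.ofReal (((1:ℝ)/16)^(M-m) * ε * (16/15)) := by
                      rw [← ENNReal.ofReal_tsum_of_nonneg (fun k => by positivity) (hsummgeo _)]
                      rw [hgeosum _ (by positivity)]
      -- real estimate of the total
      have hreal_est : ∑ m ∈ Finset.range M,
          (((1:ℝ)/16)^(M-m) * (d m)^2 * (16/15) + ((1:ℝ)/16)^(M-m) * ε * (16/15)) ≤ ε := by
        have hd2 : ∀ m : ℕ, (d m)^2 ≤ D^2 := by
          intro m
          calc (d m)^2 = |d m|^2 := (sq_abs _).symm
            _ ≤ D^2 := by nlinarith [hDb m, abs_nonneg (d m)]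
        have hB : ∑ m ∈ Finset.range M, ((1:ℝ)/16)^(M-m) * ε * (16/15) ≤ ε * (16/225) := by
          calc ∑ m ∈ Finset.range M, ((1:ℝ)/16)^(M-m) * ε * (16/15)
              = (∑ m ∈ Finset.range M, ((1:ℝ)/16)^(M-m)) * (ε * (16/15)) := by
                rw [Finset.sum_mul]
                apply Finset.sum_congr rfl; intro m _
                ring
            _ ≤ (1/15) * (ε * (16/15)) :=
                mul_le_mul_of_nonneg_right (sum_range_geo_le M) (by positivity)
            _ = ε * (16/225) := by ring
        have hA : ∑ m ∈ Finset.range M, ((1:ℝ)/16)^(M-m) * (d m)^2 * (16/15)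
            ≤ ε/4 + ε * (16/225) := by
          rw [Finset.range_eq_Ico, ← Finset.sum_Ico_consecutive _ (Nat.zero_le M0) hMM0]
          have hhead : ∑ m ∈ Finset.Ico 0 M0, ((1:ℝ)/16)^(M-m) * (d m)^2 * (16/15) ≤ ε/4 := by
            have hbd : ∀ m ∈ Finset.Ico 0 M0,
                ((1:ℝ)/16)^(M-m) * (d m)^2 * (16/15) ≤ ((1:ℝ)/16)^(M-M0) * D^2 * (16/15) := by
              intro m hm
              rw [Finset.mem_Ico] at hm
              have h8 : ((1:ℝ)/16)^(M-m) ≤ ((1:ℝ)/16)^(M-M0) :=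
                pow_le_pow_of_le_one (by norm_num) (by norm_num) (by omega)
              have h9 := hd2 m
              have h10 : (0:ℝ) ≤ ((1:ℝ)/16)^(M-m) := by positivity
              nlinarith [sq_nonneg (d m), pow_nonneg (show (0:ℝ) ≤ 1/16 by norm_num) (M-M0)]
            calc ∑ m ∈ Finset.Ico 0 M0, ((1:ℝ)/16)^(M-m) * (d m)^2 * (16/15)
                ≤ ∑ m ∈ Finset.Ico 0 M0, ((1:ℝ)/16)^(M-M0) * D^2 * (16/15) :=
                  Finset.sum_le_sum hbd
              _ = (M0:ℝ) * (((1:ℝ)/16)^(M-M0) * D^2 * (16/15)) := by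
                  rw [Finset.sum_const, Nat.card_Ico, Nat.sub_zero, nsmul_eq_mul]
              _ = (M0:ℝ) * D^2 * (16/15) * ((1:ℝ)/16)^(M-M0) := by ring
              _ ≤ ε/4 := (hM1' M hMM1).le
          have hmid : ∑ m ∈ Finset.Ico M0 M, ((1:ℝ)/16)^(M-m) * (d m)^2 * (16/15)
              ≤ ε * (16/225) := by
            calc ∑ m ∈ Finset.Ico M0 M, ((1:ℝ)/16)^(M-m) * (d m)^2 * (16/15)
                ≤ ∑ m ∈ Finset.Ico M0 M, ((1:ℝ)/16)^(M-m) * ε * (16/15) := by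
                  apply Finset.sum_le_sum
                  intro m hm
                  rw [Finset.mem_Ico] at hm
                  have h11 := hM0 m hm.1
                  have h12 : (0:ℝ) ≤ ((1:ℝ)/16)^(M-m) := by positivity
                  nlinarith
              _ ≤ ∑ m ∈ Finset.range M, ((1:ℝ)/16)^(M-m) * ε * (16/15) := by
                  apply Finset.sum_le_sum_of_subset_of_nonneg
                  · rw [Finset.range_eq_Ico]
                    exact Finset.Ico_subset_Ico (Nat.zero_le _) le_rfl
                  · intro n _ _
                    positivity
              _ ≤ ε * (16/225) := hB
          linarith
        rw [Finset.sum_add_distrib]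
        have h13 : ε * (16/225) + (ε/4 + ε * (16/225)) ≤ ε := by linarith
        linarith
      calc ∫⁻ t in Ioi (0:ℝ), W t
          = ∑ m ∈ Finset.range M, ∑' k : ℕ,
              ENNReal.ofReal (2 * (cc m (k + M) * (|d m| * |d (k + M)|))) := hWint
        _ ≤ ∑ m ∈ Finset.range M,
              (ENNReal.ofReal (((1:ℝ)/16)^(M-m) * (d m)^2 * (16/15))
                + ENNReal.ofReal (((1:ℝ)/16)^(M-m) * ε * (16/15))) := Finset.sum_le_sum hq
        _ = ENNReal.ofReal (∑ m ∈ Finset.range M,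
              (((1:ℝ)/16)^(M-m) * (d m)^2 * (16/15) + ((1:ℝ)/16)^(M-m) * ε * (16/15))) := by
            rw [ENNReal.ofReal_sum_of_nonneg (fun m _ => by positivity)]
            apply Finset.sum_congr rfl; intro m _
            rw [ENNReal.ofReal_add (by positivity) (by positivity)]
        _ ≤ ENNReal.ofReal ε := ENNReal.ofReal_le_ofReal hreal_est
    -- finish
    calc ENNReal.ofReal (7/60) * ENNReal.ofReal (∑ n ∈ Finset.range M, (d n)^2)
        = ENNReal.ofReal (7/60 * ∑ n ∈ Finset.range M, (d n)^2) :=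
          (ENNReal.ofReal_mul (by norm_num)).symm
      _ ≤ ENNReal.ofReal (∑ m ∈ Finset.range M, ∑ n ∈ Finset.range M, cc m n * d m * d n) :=
          ENNReal.ofReal_le_ofReal (schur_low d M)
      _ ≤ J + ∫⁻ t in Ioi (0:ℝ), W t := hint
      _ ≤ J + ENNReal.ofReal ε := add_le_add_right hWval _
  -- conclude from H1
  have hsup : ∑' n, ENNReal.ofReal ((d n)^2)
      = ⨆ M : ℕ, ENNReal.ofReal (∑ n ∈ Finset.range M, (d n)^2) := by
    rw [ENNReal.tsum_eq_iSup_nat]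
    congr 1
    funext M
    rw [ENNReal.ofReal_sum_of_nonneg (fun n _ => sq_nonneg _)]
  apply ENNReal.le_of_forall_pos_le_add
  intro ε hε _
  obtain ⟨M1, hM1⟩ := H1 ε (by exact_mod_cast hε)
  rw [hsup, ENNReal.mul_iSup]
  apply iSup_le
  intro M
  have hmono : ENNReal.ofReal (∑ n ∈ Finset.range M, (d n)^2)
      ≤ ENNReal.ofReal (∑ n ∈ Finset.range (max M M1), (d n)^2) := by
    apply ENNReal.ofReal_le_ofReal
    apply Finset.sum_le_sum_of_subset_of_nonneg
    · exact Finset.range_subset_range.mpr (le_max_left _ _)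
    · intro n _ _
      exact sq_nonneg _
  calc ENNReal.ofReal (7/60) * ENNReal.ofReal (∑ n ∈ Finset.range M, (d n)^2)
      ≤ ENNReal.ofReal (7/60) * ENNReal.ofReal (∑ n ∈ Finset.range (max M M1), (d n)^2) :=
        mul_le_mul_right hmono _
    _ ≤ J + ENNReal.ofReal ε := hM1 _ (le_max_right _ _)
    _ = J + ε := by rw [ENNReal.ofReal_coe_nnreal]


end Stmt11Aux

namespace Stmt11Aux

lemma lpNormE_mono_ae {Ω : Type*} [MeasurableSpace Ω] {μ : Measure Ω} {p : ℝ≥0∞}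
    {h₁ h₂ : Ω → ℝ≥0∞} (h : h₁ ≤ᵐ[μ] h₂) : lpNormE μ p h₁ ≤ lpNormE μ p h₂ := by
  rw [lpNormE, lpNormE]
  split_ifs with hp
  · exact essSup_mono_ae h
  · apply ENNReal.rpow_le_rpow _ (by positivity)
    apply lintegral_mono_ae
    filter_upwards [h] with ω hω
    exact ENNReal.rpow_le_rpow hω ENNReal.toReal_nonneg

lemma lpNormE_const_mul {Ω : Type*} [MeasurableSpace Ω] {μ : Measure Ω} {p : ℝ≥0∞}
    (hp0 : p ≠ 0) {c : ℝ≥0∞} (hc : c ≠ ⊤) (h : Ω → ℝ≥0∞) :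
    lpNormE μ p (fun ω => c * h ω) = c * lpNormE μ p h := by
  rw [lpNormE, lpNormE]
  split_ifs with hp
  · exact ENNReal.essSup_const_mul
  · have hq : 0 < p.toReal := ENNReal.toReal_pos hp0 hp
    have h1 : ∀ ω, (c * h ω) ^ p.toReal = c ^ p.toReal * h ω ^ p.toReal := fun ω =>
      ENNReal.mul_rpow_of_nonneg _ _ hq.le
    simp_rw [h1]
    rw [lintegral_const_mul' _ _ (ENNReal.rpow_ne_top_of_nonneg hq.le hc),
      ENNReal.mul_rpow_of_nonneg _ _ (by positivity : (0:ℝ) ≤ 1 / p.toReal),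
      ← ENNReal.rpow_mul, mul_one_div, div_self hq.ne', ENNReal.rpow_one]

/-- rewrite `GT` in terms of the normalized integrand -/
lemma GT_eq {Ω : Type*} [m0 : MeasurableSpace Ω] (μ : Measure Ω)
    (F : ℕ → MeasurableSpace Ω) (f : Ω → ℝ) (ω : Ω) :
    GT μ F f ω = (∫⁻ t in Ioi (0:ℝ), ENNReal.ofReal
      (t * (∑' n : ℕ, bb n * Real.exp (-(bb n * t)) * dE μ F f (n + 2) ω) ^ 2)) ^ (1/2 : ℝ) := by
  rw [GT]
  congr 1
  apply setLIntegral_congr_fun_ae measurableSet_Ioi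
  apply ae_of_all
  intro t ht
  have ht' : (0:ℝ) < t := ht
  congr 1
  have h1 : (∑' n : ℕ, t * 16 ^ (n + 2) * Real.exp (-(16 ^ (n + 2) * t)) * dE μ F f (n + 2) ω)
      = t * ∑' n : ℕ, bb n * Real.exp (-(bb n * t)) * dE μ F f (n + 2) ω := by
    rw [← tsum_mul_left]
    apply tsum_congr
    intro n
    simp only [bb]
    ring
  rw [h1]
  field_simp

lemma ae_dE_tendsto {Ω : Type*} [m0 : MeasurableSpace Ω] (μ : Measure Ω)
    [IsProbabilityMeasure μ] (F : ℕ → MeasurableSpace Ω) (hle : ∀ n, F n ≤ m0)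
    (hmono : Monotone F) (f : Ω → ℝ) (hf1 : Integrable f μ) :
    ∀ᵐ ω ∂μ, Tendsto (fun n => dE μ F f (n + 2) ω) atTop (𝓝 0) := by
  set ℱ : Filtration ℕ m0 :=
    { seq := fun n => F (n + 1)
      mono' := fun i j hij => hmono (by omega)
      le' := fun n => hle (n + 1) } with hℱ
  have hmart : Martingale (fun n => μ[f | ℱ n]) ℱ μ := martingale_condExp f ℱ μ
  have hne : eLpNorm f 1 μ ≠ ⊤ := (memLp_one_iff_integrable.mpr hf1).2.ne
  have hbdd : ∀ n, eLpNorm (μ[f | ℱ n]) 1 μ ≤ (eLpNorm f 1 μ).toNNReal := by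
    intro n
    rw [ENNReal.coe_toNNReal hne]
    exact eLpNorm_one_condExp_le_eLpNorm f
  have hconv := hmart.submartingale.ae_tendsto_limitProcess hbdd
  filter_upwards [hconv] with ω hω
  have h1 : Tendsto (fun n => (μ[f | ℱ (n + 1)]) ω) atTop
      (𝓝 (Filtration.limitProcess (fun n => μ[f | ℱ n]) ℱ μ ω)) :=
    hω.comp (tendsto_add_atTop_nat 1)
  have h2 := h1.sub hω
  rw [sub_self] at h2
  have h3 : (fun n => dE μ F f (n + 2) ω)
      = fun n => (μ[f | ℱ (n + 1)]) ω - (μ[f | ℱ n]) ω := by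
    funext n
    have e1 : dE μ F f (n + 2) ω = (μ[f | F (n + 2)]) ω - (μ[f | F (n + 1)]) ω := by
      rw [dE, condE, condE]
      norm_num
    rw [e1]
  rw [h3]
  exact h2

end Stmt11Aux

/-- For the semigroup built from `a_n = 1 - e^{-16^{n+1}}`, `1 ≤ p ≤ ∞` and `f ∈ L_p(Ω)`:
`√(7/60) ‖S(f - E_1 f)‖_p ≤ ‖G^T(f)‖_p ≤ √(23/60) ‖S(f - E_1 f)‖_p`. -/
theorem stmt11 {Ω : Type*} [m0 : MeasurableSpace Ω] (μ : Measure Ω) [IsProbabilityMeasure μ]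
    (F : ℕ → MeasurableSpace Ω) (hle : ∀ n, F n ≤ m0) (hmono : Monotone F)
    (p : ℝ≥0∞) (hp : 1 ≤ p) (f : Ω → ℝ) (hf : MemLp f p μ) (hf1 : Integrable f μ) :
    ENNReal.ofReal (Real.sqrt (7 / 60)) * lpNormE μ p (Ssq μ F f) ≤
        lpNormE μ p (GT μ F f) ∧
      lpNormE μ p (GT μ F f) ≤
        ENNReal.ofReal (Real.sqrt (23 / 60)) * lpNormE μ p (Ssq μ F f) := by
  have hp0 : p ≠ 0 := (lt_of_lt_of_le zero_lt_one hp).ne'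
  -- constants as rpow
  have c1eq : ENNReal.ofReal (Real.sqrt (7 / 60)) = ENNReal.ofReal (7/60) ^ (1/2 : ℝ) := by
    rw [ENNReal.ofReal_rpow_of_pos (by norm_num), Real.sqrt_eq_rpow]
  have c2eq : ENNReal.ofReal (Real.sqrt (23 / 60)) = ENNReal.ofReal (23/60) ^ (1/2 : ℝ) := by
    rw [ENNReal.ofReal_rpow_of_pos (by norm_num), Real.sqrt_eq_rpow]
  -- pointwise upper bound (everywhere)
  have hup : ∀ ω, GT μ F f ω ≤ ENNReal.ofReal (Real.sqrt (23 / 60)) * Ssq μ F f ω := by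
    intro ω
    rw [Stmt11Aux.GT_eq μ F f ω]
    simp only [Ssq]
    calc (∫⁻ t in Ioi (0:ℝ), ENNReal.ofReal
          (t * (∑' n : ℕ, Stmt11Aux.bb n * Real.exp (-(Stmt11Aux.bb n * t))
            * dE μ F f (n + 2) ω) ^ 2)) ^ (1/2 : ℝ)
        ≤ (ENNReal.ofReal (23/60)
            * ∑' n : ℕ, ENNReal.ofReal ((dE μ F f (n + 2) ω) ^ 2)) ^ (1/2 : ℝ) :=
          ENNReal.rpow_le_rpow (Stmt11Aux.upper_pt (fun n => dE μ F f (n + 2) ω)) (by norm_num)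
      _ = ENNReal.ofReal (Real.sqrt (23 / 60))
            * (∑' n : ℕ, ENNReal.ofReal ((dE μ F f (n + 2) ω) ^ 2)) ^ (1/2 : ℝ) := by
          rw [ENNReal.mul_rpow_of_nonneg _ _ (by norm_num : (0:ℝ) ≤ 1/2), c2eq]
  -- pointwise lower bound (a.e.)
  have hlow : ∀ᵐ ω ∂μ, ENNReal.ofReal (Real.sqrt (7 / 60)) * Ssq μ F f ω ≤ GT μ F f ω := by
    filter_upwards [Stmt11Aux.ae_dE_tendsto μ F hle hmono f hf1] with ω hω
    rw [Stmt11Aux.GT_eq μ F f ω]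
    simp only [Ssq]
    calc ENNReal.ofReal (Real.sqrt (7 / 60))
          * (∑' n : ℕ, ENNReal.ofReal ((dE μ F f (n + 2) ω) ^ 2)) ^ (1/2 : ℝ)
        = (ENNReal.ofReal (7/60)
            * ∑' n : ℕ, ENNReal.ofReal ((dE μ F f (n + 2) ω) ^ 2)) ^ (1/2 : ℝ) := by
          rw [ENNReal.mul_rpow_of_nonneg _ _ (by norm_num : (0:ℝ) ≤ 1/2), c1eq]
      _ ≤ (∫⁻ t in Ioi (0:ℝ), ENNReal.ofReal
            (t * (∑' n : ℕ, Stmt11Aux.bb n * Real.exp (-(Stmt11Aux.bb n * t))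
              * dE μ F f (n + 2) ω) ^ 2)) ^ (1/2 : ℝ) :=
          ENNReal.rpow_le_rpow
            (Stmt11Aux.lower_pt (fun n => dE μ F f (n + 2) ω) hω) (by norm_num)
  constructor
  · calc ENNReal.ofReal (Real.sqrt (7 / 60)) * lpNormE μ p (Ssq μ F f)
        = lpNormE μ p (fun ω => ENNReal.ofReal (Real.sqrt (7 / 60)) * Ssq μ F f ω) :=
          (Stmt11Aux.lpNormE_const_mul hp0 ENNReal.ofReal_ne_top _).symm
      _ ≤ lpNormE μ p (GT μ F f) := Stmt11Aux.lpNormE_mono_ae hlow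
  · calc lpNormE μ p (GT μ F f)
        ≤ lpNormE μ p (fun ω => ENNReal.ofReal (Real.sqrt (23 / 60)) * Ssq μ F f ω) :=
          Stmt11Aux.lpNormE_mono_ae (ae_of_all _ hup)
      _ = ENNReal.ofReal (Real.sqrt (23 / 60)) * lpNormE μ p (Ssq μ F f) :=
          Stmt11Aux.lpNormE_const_mul hp0 ENNReal.ofReal_ne_top _
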